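/- Let H = (V, E, ℓ) be an edge-colored hypergraph with k colors, and let G be its conflict graph: the vertex set of G is E, partitioned into classes V_c = {e ∈ E : ℓ(e) = c} for c ∈ [k], with an edge between e and f whenever e ∩ f ≠ ∅ and ℓ(e) ≠ ℓ(f). Then the minimum over all vertex colorings λ : V → [k] of max_{c ∈ [k]} (number of hyperedges of color c unsatisfied by λ) equals the minimum over all vertex covers C of G of max_{c ∈ [k]} |C ∩ V_c|. -/
import Mathlib


open scoped Classical

theorem stmt19 {V ι : Type*} [Fintype V] [Fintype ι] [DecidableEq V]
    (k : ℕ) (hk : 0 < k)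
    (edge : ι → Finset V) (hne : ∀ e, (edge e).Nonempty) (ℓ : ι → Fin k) :
    sInf {t : ℕ | ∃ lam : V → Fin k,
        t = Finset.univ.sup (fun c : Fin k =>
          (Finset.univ.filter (fun e : ι =>
            ℓ e = c ∧ ¬ (∀ v ∈ edge e, lam v = c))).card)} =
    sInf {t : ℕ | ∃ C : Finset ι,
        (∀ e f : ι, (edge e ∩ edge f).Nonempty → ℓ e ≠ ℓ f → e ∈ C ∨ f ∈ C) ∧
        t = Finset.univ.sup (fun c : Fin k =>
          (C.filter (fun e : ι => ℓ e = c)).card)} := by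
  apply le_antisymm
  · -- LHS ≤ RHS : for each cover C, build a coloring
    apply le_csInf
    · exact ⟨_, Finset.univ, fun e f _ _ => Or.inl (Finset.mem_univ e), rfl⟩
    rintro t ⟨C, hcov, rfl⟩
    set lam : V → Fin k := fun v =>
      if h : ∃ e, e ∉ C ∧ v ∈ edge e then ℓ h.choose else ⟨0, hk⟩ with hlam
    have key : ∀ e, e ∉ C → ∀ v ∈ edge e, lam v = ℓ e := by
      intro e he v hv
      have h : ∃ e, e ∉ C ∧ v ∈ edge e := ⟨e, he, hv⟩
      have hf := h.choose_spec
      have : lam v = ℓ h.choose := by simp [hlam, dif_pos h]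
      rw [this]
      by_contra hne'
      rcases hcov h.choose e ⟨v, Finset.mem_inter.2 ⟨hf.2, hv⟩⟩ hne' with h1 | h1
      · exact hf.1 h1
      · exact he h1
    refine le_trans (Nat.sInf_le ⟨lam, rfl⟩) ?_
    apply Finset.sup_mono_fun
    intro c _
    apply Finset.card_le_card
    intro e he
    simp only [Finset.mem_filter, Finset.mem_univ, true_and] at he ⊢
    refine ⟨?_, he.1⟩
    by_contra heC
    exact he.2 (fun v hv => he.1 ▸ key e heC v hv)
  · -- RHS ≤ LHS : each lam gives a cover
    apply le_csInf
    · exact ⟨_, fun _ => ⟨0, hk⟩, rfl⟩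
    rintro t ⟨lam, rfl⟩
    apply Nat.sInf_le
    refine ⟨Finset.univ.filter (fun e => ¬ (∀ v ∈ edge e, lam v = ℓ e)), ?_, ?_⟩
    · intro e f ⟨v, hv⟩ hef
      simp only [Finset.mem_inter] at hv
      by_cases he : ∀ w ∈ edge e, lam w = ℓ e
      · by_cases hf : ∀ w ∈ edge f, lam w = ℓ f
        · exact absurd ((he v hv.1).symm.trans (hf v hv.2)) hef
        · exact Or.inr (Finset.mem_filter.2 ⟨Finset.mem_univ f, hf⟩)
      · exact Or.inl (Finset.mem_filter.2 ⟨Finset.mem_univ e, he⟩)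
    · congr 1
      funext c
      congr 1
      ext e
      simp only [Finset.mem_filter, Finset.mem_univ, true_and]
      constructor
      · rintro ⟨h1, h2⟩
        exact ⟨fun hall => h2 (fun v hv => (hall v hv).trans h1), h1⟩
      · rintro ⟨h2, h1⟩
        exact ⟨h1, fun hall => h2 (fun v hv => (hall v hv).trans h1.symm)⟩
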